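/- For one-dimensional Gaussians P = N(μ₁, σ₁²) and Q = N(μ₂, σ₂²) with α > 1 and ασ₂² + (1-α)σ₁² > 0, the Rényi divergence of order α satisfies D_α(P‖Q) = α(μ₁-μ₂)²/(2(ασ₂² + (1-α)σ₁²)) + (1/(α-1)) log(σ₁^{1-α} σ₂^α / √(ασ₂² + (1-α)σ₁²)). -/

import Mathlib

open Real MeasureTheory

/-- Rényi divergence of order `α` between two one-dimensional Gaussians,
defined via `(1/(α-1)) log ∫ P(x)^α Q(x)^(1-α) dx`. -/
theorem renyi_divergence_gaussians_1d
    (μ₁ μ₂ σ₁ σ₂ α : ℝ) (hσ₁ : 0 < σ₁) (hσ₂ : 0 < σ₂) (hα : 1 < α)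
    (hpos : 0 < α * σ₂ ^ 2 + (1 - α) * σ₁ ^ 2) :
    let P : ℝ → ℝ := fun x =>
      (σ₁ * Real.sqrt (2 * Real.pi))⁻¹ * Real.exp (-(x - μ₁) ^ 2 / (2 * σ₁ ^ 2))
    let Q : ℝ → ℝ := fun x =>
      (σ₂ * Real.sqrt (2 * Real.pi))⁻¹ * Real.exp (-(x - μ₂) ^ 2 / (2 * σ₂ ^ 2))
    (α - 1)⁻¹ * Real.log (∫ x : ℝ, P x ^ α * Q x ^ (1 - α)) =
      α * (μ₁ - μ₂) ^ 2 / (2 * (α * σ₂ ^ 2 + (1 - α) * σ₁ ^ 2)) +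
        1 / (α - 1) *
          Real.log (σ₁ ^ (1 - α) * σ₂ ^ α /
            Real.sqrt (α * σ₂ ^ 2 + (1 - α) * σ₁ ^ 2)) := by
  intro P Q
  set s : ℝ := α * σ₂ ^ 2 + (1 - α) * σ₁ ^ 2 with hs
  have hs0 : s ≠ 0 := ne_of_gt hpos
  have hs' : α * σ₂ ^ 2 + (1 - α) * σ₁ ^ 2 ≠ 0 := by rw [← hs]; exact hs0
  have hσ₁0 : σ₁ ≠ 0 := ne_of_gt hσ₁
  have hσ₂0 : σ₂ ≠ 0 := ne_of_gt hσ₂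
  have h2π : (0:ℝ) < 2 * Real.pi := by positivity
  have hsq : (0:ℝ) < Real.sqrt (2 * Real.pi) := Real.sqrt_pos.mpr h2π
  set b : ℝ := s / (2 * σ₁ ^ 2 * σ₂ ^ 2) with hb
  have hb0 : 0 < b := by positivity
  set m : ℝ := (α * σ₂ ^ 2 * μ₁ + (1 - α) * σ₁ ^ 2 * μ₂) / s with hm
  set G : ℝ := α * (α - 1) * (μ₁ - μ₂) ^ 2 / (2 * s) with hG
  set C : ℝ := (σ₁ * Real.sqrt (2 * Real.pi)) ^ (-α) *
      (σ₂ * Real.sqrt (2 * Real.pi)) ^ (α - 1) * Real.exp G with hC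
  -- pointwise identity
  have hpt : ∀ x : ℝ, P x ^ α * Q x ^ (1 - α) = C * Real.exp (-b * (x - m) ^ 2) := by
    intro x
    have h1 : P x ^ α = (σ₁ * Real.sqrt (2 * Real.pi)) ^ (-α) *
        Real.exp (-(x - μ₁) ^ 2 / (2 * σ₁ ^ 2) * α) := by
      simp only [P]
      rw [Real.mul_rpow (by positivity) (Real.exp_pos _).le, Real.exp_mul,
        ← Real.rpow_neg_one, ← Real.rpow_mul (by positivity)]
      ring_nf
    have h2 : Q x ^ (1 - α) = (σ₂ * Real.sqrt (2 * Real.pi)) ^ (α - 1) *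
        Real.exp (-(x - μ₂) ^ 2 / (2 * σ₂ ^ 2) * (1 - α)) := by
      simp only [Q]
      rw [Real.mul_rpow (by positivity) (Real.exp_pos _).le, Real.exp_mul,
        ← Real.rpow_neg_one, ← Real.rpow_mul (by positivity)]
      ring_nf
    have key : -(x - μ₁) ^ 2 / (2 * σ₁ ^ 2) * α + -(x - μ₂) ^ 2 / (2 * σ₂ ^ 2) * (1 - α)
        = G + -b * (x - m) ^ 2 := by
      rw [hG, hb, hm]
      field_simp
      rw [hs]
      ring
    rw [h1, h2, hC, mul_mul_mul_comm, ← Real.exp_add, key, Real.exp_add]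
    ring
  -- the integral
  have hint : (∫ x : ℝ, P x ^ α * Q x ^ (1 - α))
      = σ₁ ^ (1 - α) * σ₂ ^ α / Real.sqrt s * Real.exp G := by
    have h3 : (∫ x : ℝ, P x ^ α * Q x ^ (1 - α)) = C * Real.sqrt (Real.pi / b) := by
      simp_rw [hpt]
      rw [integral_const_mul]
      congr 1
      rw [show (∫ x : ℝ, Real.exp (-b * (x - m) ^ 2))
          = ∫ x : ℝ, Real.exp (-b * x ^ 2) from
        integral_sub_right_eq_self (fun x => Real.exp (-b * x ^ 2)) m]
      exact integral_gaussian b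
    have hsqb : Real.sqrt (Real.pi / b) = Real.sqrt (2 * Real.pi) * (σ₁ * σ₂) / Real.sqrt s := by
      rw [hb, show Real.pi / (s / (2 * σ₁ ^ 2 * σ₂ ^ 2)) = 2 * Real.pi * (σ₁ * σ₂) ^ 2 / s by
        field_simp]
      rw [Real.sqrt_div (by positivity), Real.sqrt_mul (by positivity),
        Real.sqrt_sq (by positivity)]
    rw [h3, hsqb, hC]
    have e1 : (σ₁ * Real.sqrt (2 * Real.pi)) ^ (-α)
        = σ₁ ^ (-α) * (Real.sqrt (2 * Real.pi)) ^ (-α) :=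
      Real.mul_rpow hσ₁.le hsq.le
    have e2 : (σ₂ * Real.sqrt (2 * Real.pi)) ^ (α - 1)
        = σ₂ ^ (α - 1) * (Real.sqrt (2 * Real.pi)) ^ (α - 1) :=
      Real.mul_rpow hσ₂.le hsq.le
    have A1 : σ₁ ^ (-α) * σ₁ = σ₁ ^ (1 - α) := by
      nth_rewrite 2 [← Real.rpow_one σ₁]
      rw [← Real.rpow_add hσ₁]; ring_nf
    have A2 : σ₂ ^ (α - 1) * σ₂ = σ₂ ^ α := by
      nth_rewrite 2 [← Real.rpow_one σ₂]
      rw [← Real.rpow_add hσ₂]; ring_nf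
    have A3 : (Real.sqrt (2 * Real.pi)) ^ (-α) * (Real.sqrt (2 * Real.pi)) ^ (α - 1)
        * Real.sqrt (2 * Real.pi) = 1 := by
      nth_rewrite 3 [← Real.rpow_one (Real.sqrt (2 * Real.pi))]
      rw [← Real.rpow_add hsq, ← Real.rpow_add hsq,
        show -α + (α - 1) + 1 = 0 by ring, Real.rpow_zero]
    rw [e1, e2]
    calc σ₁ ^ (-α) * (Real.sqrt (2 * Real.pi)) ^ (-α) *
          (σ₂ ^ (α - 1) * (Real.sqrt (2 * Real.pi)) ^ (α - 1)) * Real.exp G *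
          (Real.sqrt (2 * Real.pi) * (σ₁ * σ₂) / Real.sqrt s)
        = (σ₁ ^ (-α) * σ₁) * (σ₂ ^ (α - 1) * σ₂) *
          ((Real.sqrt (2 * Real.pi)) ^ (-α) * (Real.sqrt (2 * Real.pi)) ^ (α - 1)
            * Real.sqrt (2 * Real.pi)) / Real.sqrt s * Real.exp G := by ring
      _ = σ₁ ^ (1 - α) * σ₂ ^ α / Real.sqrt s * Real.exp G := by
          rw [A1, A2, A3]; ring
  -- conclude
  have hE : (0:ℝ) < σ₁ ^ (1 - α) * σ₂ ^ α / Real.sqrt s := by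
    have : (0:ℝ) < Real.sqrt s := Real.sqrt_pos.mpr hpos
    positivity
  rw [hint, Real.log_mul (ne_of_gt hE) (Real.exp_ne_zero _), Real.log_exp, hG]
  have hα1 : α - 1 ≠ 0 := by linarith
  field_simp
  ring
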